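/- arXiv:dg-ga/9703007 — 3 statements merged into one kernel-verified Lean document; each statement's English description precedes it below -/
import Mathlib

section
/- Let ρ: G → N be a group homomorphism from the Artin group G = ⟨x_i, x_j | (x_i x_j)^q = (x_j x_i)^q⟩ (the Artin group with edge label 2q) to a torsion-free nilpotent group N. Then ρ(x_i) and ρ(x_j) commute. -/
section Aux

variable {G : Type*} [Group G]

/-- If `[a,b] = z` is central, then `a^n * b * a^{-n} = z^n * b`. -/
private lemma aux_conj_pow {a b z : G} (hz : z ∈ Subgroup.center G)
    (h : a * b * a⁻¹ * b⁻¹ = z) (n : ℕ) : a ^ n * b * (a ^ n)⁻¹ = z ^ n * b := by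
  have hab : a * b * a⁻¹ = z * b := by
    have h' := congrArg (· * b) h
    simpa [mul_assoc] using h'
  induction n with
  | zero => simp
  | succ n ih =>
    calc a ^ (n+1) * b * (a ^ (n+1))⁻¹
        = a * (a ^ n * b * (a ^ n)⁻¹) * a⁻¹ := by
          rw [pow_succ']
          group
      _ = a * (z ^ n * b) * a⁻¹ := by rw [ih]
      _ = z ^ n * (a * b * a⁻¹) := by
          have : a * z ^ n = z ^ n * a := by
            have : z ^ n ∈ Subgroup.center G := pow_mem hz n
            exact (Subgroup.mem_center_iff.mp this) a
          rw [← mul_assoc, this]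
          group
      _ = z ^ n * (z * b) := by rw [hab]
      _ = z ^ (n+1) * b := by rw [pow_succ]; group

/-- In a torsion-free group: if `x ∈ Z_{j+1}` and `x^n ∈ Z_j` then `x ∈ Z_j`. -/
private lemma aux_descend (hN : ∀ g : G, g ≠ 1 → ¬IsOfFinOrder g) {n : ℕ} (hn : n ≠ 0) :
    ∀ j : ℕ, ∀ x : G, x ∈ Subgroup.upperCentralSeries G (j + 1) →
      x ^ n ∈ Subgroup.upperCentralSeries G j → x ∈ Subgroup.upperCentralSeries G j := by
  intro j
  induction j with
  | zero =>
    intro x _ hxn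
    rw [Subgroup.upperCentralSeries_zero, Subgroup.mem_bot] at hxn ⊢
    by_contra hx1
    exact hN x hx1 (isOfFinOrder_iff_pow_eq_one.mpr ⟨n, Nat.pos_of_ne_zero hn, hxn⟩)
  | succ j ih =>
    intro x hx hxn
    rw [Subgroup.mem_upperCentralSeries_succ_iff]
    intro g
    set K := Subgroup.upperCentralSeries G j with hK
    have hz1 : x * g * x⁻¹ * g⁻¹ ∈ Subgroup.upperCentralSeries G (j + 1) :=
      (Subgroup.mem_upperCentralSeries_succ_iff.mp hx) g
    -- show (x*g*x⁻¹*g⁻¹)^n ∈ K using the quotient G ⧸ K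
    have hzn : (x * g * x⁻¹ * g⁻¹) ^ n ∈ K := by
      set z := x * g * x⁻¹ * g⁻¹ with hzdef
      let π : G →* G ⧸ K := QuotientGroup.mk' K
      have hcen : π z ∈ Subgroup.center (G ⧸ K) := by
        rw [Subgroup.mem_center_iff]
        intro w
        obtain ⟨w, rfl⟩ := QuotientGroup.mk'_surjective K w
        have hm : z * w * z⁻¹ * w⁻¹ ∈ K :=
          (Subgroup.mem_upperCentralSeries_succ_iff.mp hz1) w
        have h1 : π z * π w * (π z)⁻¹ * (π w)⁻¹ = 1 := by
          rw [← map_inv, ← map_inv, ← map_mul, ← map_mul, ← map_mul]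
          exact (QuotientGroup.eq_one_iff _).mpr hm
        have h2 : π z * π w = π w * π z :=
          mul_inv_eq_iff_eq_mul.mp (mul_inv_eq_one.mp h1)
        exact h2.symm
      have hcomm : π z = π x * π g * (π x)⁻¹ * (π g)⁻¹ := by
        simp [hzdef, map_mul, map_inv]
      have key := aux_conj_pow hcen hcomm.symm n
      have hxg : x ^ n * g * (x ^ n)⁻¹ * g⁻¹ ∈ K :=
        (Subgroup.mem_upperCentralSeries_succ_iff.mp hxn) g
      have h1 : (π x) ^ n * π g * ((π x) ^ n)⁻¹ * (π g)⁻¹ = 1 := by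
        rw [← map_pow, ← map_inv, ← map_inv, ← map_mul, ← map_mul, ← map_mul]
        exact (QuotientGroup.eq_one_iff _).mpr hxg
      have h2 : (π x) ^ n * π g * ((π x) ^ n)⁻¹ = π g := mul_inv_eq_one.mp h1
      rw [key] at h2
      have h3 : (π z) ^ n = 1 := by
        have h4 : (π z) ^ n * π g = 1 * π g := by simpa using h2
        exact mul_right_cancel h4
      have : π (z ^ n) = 1 := by rw [map_pow]; exact h3
      exact (QuotientGroup.eq_one_iff _).mp this
    exact ih _ hz1 hzn

/-- In a torsion-free nilpotent group, the center is isolated. -/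
private lemma aux_isolated_center [Group.IsNilpotent G] (hN : ∀ g : G, g ≠ 1 → ¬IsOfFinOrder g)
    {n : ℕ} (hn : n ≠ 0) {x : G} (hx : x ^ n ∈ Subgroup.center G) :
    x ∈ Subgroup.center G := by
  obtain ⟨c, hc⟩ := Group.IsNilpotent.nilpotent (G := G)
  rw [← Subgroup.upperCentralSeries_one] at hx ⊢
  have key : ∀ m : ℕ, x ∈ Subgroup.upperCentralSeries G (m + 1) → x ∈ Subgroup.upperCentralSeries G 1 := by
    intro m
    induction m with
    | zero => exact id
    | succ m ih =>
      intro h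
      exact ih (aux_descend hN hn (m + 1) x h
        (Subgroup.upperCentralSeries_mono G (by omega) hx))
  exact key c (by
    have : x ∈ Subgroup.upperCentralSeries G c := hc ▸ Subgroup.mem_top x
    exact Subgroup.upperCentralSeries_mono G (by omega) this)

private lemma aux_conj_pow' (a x : G) (q : ℕ) : (a⁻¹ * x * a) ^ q = a⁻¹ * x ^ q * a := by
  induction q with
  | zero => simp
  | succ q ih => rw [pow_succ, ih, pow_succ]; group

private lemma aux_conj_pow'' (a x : G) (q : ℕ) : (a * x * a⁻¹) ^ q = a * x ^ q * a⁻¹ := by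
  induction q with
  | zero => simp
  | succ q ih => rw [pow_succ, ih, pow_succ]; group

/-- The core statement: in torsion-free nilpotent `G`, `(ab)^q = (ba)^q` forces `ab = ba`. -/
private lemma aux_main [Group.IsNilpotent G] (hN : ∀ g : G, g ≠ 1 → ¬IsOfFinOrder g)
    {q : ℕ} (hq : q ≠ 0) (a b : G) (h : (a * b) ^ q = (b * a) ^ q) :
    a * b = b * a := by
  have hba1 : b * a = a⁻¹ * (a * b) * a := by group
  have hba2 : b * a = b * (a * b) * b⁻¹ := by group
  have e1 : (b * a) ^ q = a⁻¹ * (a * b) ^ q * a := by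
    rw [hba1, aux_conj_pow']
  have e2 : (b * a) ^ q = b * (a * b) ^ q * b⁻¹ := by
    rw [hba2, aux_conj_pow'']
  have hca : (a * b) ^ q * a = a * (a * b) ^ q := by
    have h2 := congrArg (fun y => a * y) (h.trans e1)
    simpa [mul_assoc] using h2.symm
  have hcb : (a * b) ^ q * b = b * (a * b) ^ q := by
    have h2 := congrArg (fun y => y * b) (h.trans e2)
    simpa [mul_assoc] using h2
  -- work in the subgroup generated by a and b
  set H : Subgroup G := Subgroup.closure {a, b} with hH
  have ha : a ∈ H := Subgroup.subset_closure (by simp)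
  have hb : b ∈ H := Subgroup.subset_closure (by simp)
  have hle : H ≤ Subgroup.centralizer {(a * b) ^ q} := by
    rw [hH]
    refine (Subgroup.closure_le _).mpr ?_
    intro w hw
    rcases hw with hw | hw
    · subst hw
      exact Subgroup.mem_centralizer_iff.mpr
        (by intro t ht; rw [Set.mem_singleton_iff] at ht; subst ht; exact hca)
    · rw [Set.mem_singleton_iff] at hw; subst hw
      exact Subgroup.mem_centralizer_iff.mpr
        (by intro t ht; rw [Set.mem_singleton_iff] at ht; subst ht; exact hcb)
  have hcent : ∀ g ∈ H, (a * b) ^ q * g = g * (a * b) ^ q := by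
    intro g hg
    exact Subgroup.mem_centralizer_iff.mp (hle hg) _ (Set.mem_singleton _)
  -- pass to the subgroup H, where (a*b)^q is central
  let A : H := ⟨a, ha⟩
  let B : H := ⟨b, hb⟩
  have hABpow : (A * B) ^ q ∈ Subgroup.center H := by
    rw [Subgroup.mem_center_iff]
    intro g
    apply Subtype.ext
    have : ((A * B) ^ q : H) = ((a * b) ^ q : G) := by
      push_cast
      rfl
    calc ((g * (A * B) ^ q : H) : G) = (g : G) * (a * b) ^ q := by
          rw [Subgroup.coe_mul, this]
      _ = (a * b) ^ q * (g : G) := (hcent (g : G) g.2).symm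
      _ = (((A * B) ^ q * g : H) : G) := by rw [Subgroup.coe_mul, this]
  have hTFH : ∀ g : H, g ≠ 1 → ¬IsOfFinOrder g :=
    fun g hg hfin => hN (g : G) (fun h => hg (Subtype.ext h)) (H.subtype.isOfFinOrder hfin)
  have hAB : (A * B : H) ∈ Subgroup.center H := aux_isolated_center hTFH hq hABpow
  have : A * (A * B) = (A * B) * A := Subgroup.mem_center_iff.mp hAB A
  have hG : a * (a * b) = (a * b) * a := by
    have := congrArg (Subtype.val) this
    simpa using this
  have : a * (a * b) = a * (b * a) := by
    rw [hG]; group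
  exact mul_left_cancel this

end Aux

/-- The relation set of the two–generator Artin group with even edge label `2q`:
`(x y)^q = (y x)^q`, generators indexed by `Bool`. -/
def artinEvenRels (q : ℕ) : Set (FreeGroup Bool) :=
  {(FreeGroup.of true * FreeGroup.of false) ^ q *
      ((FreeGroup.of false * FreeGroup.of true) ^ q)⁻¹}

/-- Any homomorphism from the Artin group `⟨x, y | (xy)^q = (yx)^q⟩` (edge label `2q`)
to a torsion-free nilpotent group `N` sends the generators to commuting elements. -/
theorem stmt_7 (q : ℕ) (hq : 1 ≤ q) (N : Type) [Group N] [Group.IsNilpotent N]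
    (hN : ∀ g : N, g ≠ 1 → ¬IsOfFinOrder g)
    (ρ : PresentedGroup (artinEvenRels q) →* N) :
    Commute (ρ (PresentedGroup.of true)) (ρ (PresentedGroup.of false)) := by
  -- the relation holds in the presented group
  have hrel : ((PresentedGroup.of true : PresentedGroup (artinEvenRels q)) *
      PresentedGroup.of false) ^ q =
      (PresentedGroup.of false * (PresentedGroup.of true : PresentedGroup (artinEvenRels q))) ^ q := by
    have hmem : (FreeGroup.of true * FreeGroup.of false) ^ q *
        ((FreeGroup.of false * FreeGroup.of true) ^ q)⁻¹ ∈
        Subgroup.normalClosure (artinEvenRels q) :=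
      Subgroup.subset_normalClosure (by simp [artinEvenRels])
    have h1 : PresentedGroup.mk (artinEvenRels q)
        ((FreeGroup.of true * FreeGroup.of false) ^ q *
          ((FreeGroup.of false * FreeGroup.of true) ^ q)⁻¹) = 1 :=
      (QuotientGroup.eq_one_iff _).mpr hmem
    rw [map_mul, map_inv, map_pow, map_pow, map_mul, map_mul, mul_inv_eq_one] at h1
    exact h1
  have h : (ρ (PresentedGroup.of true) * ρ (PresentedGroup.of false)) ^ q =
      (ρ (PresentedGroup.of false) * ρ (PresentedGroup.of true)) ^ q := by
    rw [← map_mul, ← map_mul, ← map_pow, ← map_pow, hrel]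
  exact aux_main hN (by omega : q ≠ 0) _ _ h
end

section
/- Let ρ: G → N be a homomorphism from the Artin group G = ⟨x_i, x_j | (x_i x_j)^q x_i = (x_j x_i)^q x_j⟩ (edge label 2q+1) to a torsion-free nilpotent group N. Then ρ(x_i) = ρ(x_j). -/
/-- The relation set of the two–generator Artin group with odd edge label `2q+1`:
`(x y)^q x = (y x)^q y`, generators indexed by `Bool`. -/
def artinOddRels (q : ℕ) : Set (FreeGroup Bool) :=
  {(FreeGroup.of true * FreeGroup.of false) ^ q * FreeGroup.of true *
      ((FreeGroup.of false * FreeGroup.of true) ^ q * FreeGroup.of false)⁻¹}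

/-- If `d` is central and `(a(ad))^q a = ((ad)a)^q (ad)` then `d = 1`. -/
lemma aux_central (G : Type*) [Group G] (q : ℕ) (a d : G) (hc : ∀ x : G, d * x = x * d)
    (h : (a * (a * d)) ^ q * a = ((a * d) * a) ^ q * (a * d)) : d = 1 := by
  have hcom : Commute (a * a) d := (hc (a * a)).symm
  have h1 : (a * (a * d)) = a * a * d := by group
  have h2 : ((a * d) * a) = a * a * d := by rw [mul_assoc, hc a, mul_assoc]
  rw [h1, h2, hcom.mul_pow] at h
  have h3 : (a * a) ^ q * d ^ q * a = (a * a) ^ q * d ^ q * (a * d) := by rw [h]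
  exact (left_eq_mul.mp (mul_left_cancel h3)).symm ▸ rfl

/-- Any homomorphism from the Artin group `⟨x, y | (xy)^q x = (yx)^q y⟩` (edge label `2q+1`)
to a torsion-free nilpotent group `N` identifies the images of the two generators. -/
theorem stmt_8 (q : ℕ) (hq : 1 ≤ q) (N : Type) [Group N] [Group.IsNilpotent N]
    (hN : ∀ g : N, g ≠ 1 → ¬IsOfFinOrder g)
    (ρ : PresentedGroup (artinOddRels q) →* N) :
    ρ (PresentedGroup.of true) = ρ (PresentedGroup.of false) := by
  set a := ρ (PresentedGroup.of true) with ha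
  set b := ρ (PresentedGroup.of false) with hb
  -- the relation holds in N
  have hrel : (a * b) ^ q * a = (b * a) ^ q * b := by
    have hr : ((FreeGroup.of true * FreeGroup.of false) ^ q * FreeGroup.of true *
        ((FreeGroup.of false * FreeGroup.of true) ^ q * FreeGroup.of false)⁻¹ :
        FreeGroup Bool) ∈ Subgroup.normalClosure (artinOddRels q) :=
      Subgroup.subset_normalClosure rfl
    have h1 : (QuotientGroup.mk ((FreeGroup.of true * FreeGroup.of false) ^ q *
        FreeGroup.of true *
        ((FreeGroup.of false * FreeGroup.of true) ^ q * FreeGroup.of false)⁻¹) :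
        PresentedGroup (artinOddRels q)) = 1 := (QuotientGroup.eq_one_iff _).mpr hr
    have h2 : ((PresentedGroup.of true * PresentedGroup.of false) ^ q *
        PresentedGroup.of true *
        ((PresentedGroup.of false * PresentedGroup.of true) ^ q *
          PresentedGroup.of false)⁻¹ : PresentedGroup (artinOddRels q)) = 1 := by
      exact h1
    have h3 := congrArg ρ h2
    simp only [map_mul, map_pow, map_inv, map_one, ← ha, ← hb] at h3
    exact mul_inv_eq_one.mp h3
  -- show d := a⁻¹ * b is trivial using the lower central series
  set d := a⁻¹ * b with hd
  have hbd : b = a * d := by rw [hd, mul_inv_cancel_left]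
  have key : ∀ k : ℕ, d ∈ Subgroup.lowerCentralSeries (⊤ : Subgroup N) k := by
    intro k
    induction k with
    | zero => exact Subgroup.mem_top d
    | succ k ih =>
      set H := Subgroup.lowerCentralSeries (⊤ : Subgroup N) (k + 1) with hH
      haveI : (H).Normal := Subgroup.lowerCentralSeries_normal ⊤ (k + 1)
      set π : N →* N ⧸ H := QuotientGroup.mk' H with hπ
      have hcent : ∀ x : N ⧸ H, π d * x = x * π d := by
        intro x
        obtain ⟨g, rfl⟩ := QuotientGroup.mk'_surjective H x
        rw [← map_mul, ← map_mul]
        rw [QuotientGroup.mk'_eq_mk' ]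
        open scoped commutatorElement in refine ⟨⁅g⁻¹, d⁻¹⁆, ?_, by rw [commutatorElement_def]; group⟩
        rw [hH, ← commutatorElement_inv]
        exact Subgroup.inv_mem _
          (lowerCentralSeries_isDescendingCentralSeries.2 d⁻¹ k (Subgroup.inv_mem _ ih) g⁻¹)
      have hrel' : (π a * (π a * π d)) ^ q * π a =
          ((π a * π d) * π a) ^ q * (π a * π d) := by
        have := congrArg π hrel
        simpa only [map_mul, map_pow, hbd] using this
      have : π d = 1 := aux_central _ q (π a) (π d) hcent hrel'
      exact (QuotientGroup.eq_one_iff d).mp this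
  obtain ⟨n, hn⟩ := nilpotent_iff_lowerCentralSeries.mp ‹Group.IsNilpotent N›
  have : d = 1 := by
    have := key n
    rwa [hn, Subgroup.mem_bot] at this
  rw [hd] at this
  exact inv_mul_eq_one.mp this
end

section
/- Let R be a commutative ring and u₁, u₂ ∈ R³. Suppose there exists u₃ ∈ R³ with (u₁ × u₂) · u₃ = 1. Then {u₁, u₂, u₃} is a basis of R³, the submodule Span{u₁, u₂} is free of rank 2, is a direct summand of R³, and equals the kernel of the linear form v ↦ (u₁ × u₂) · v. -/
open Matrix

/-- Let `R` be a commutative ring and `u₁, u₂ ∈ R³`.  If there exists `u₃ ∈ R³` with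
`(u₁ × u₂) · u₃ = 1`, then `{u₁, u₂, u₃}` is a basis of `R³`, the submodule
`Span{u₁, u₂}` is free of rank `2` (with basis `{u₁, u₂}`), is a direct summand of
`R³`, and equals the kernel of the linear form `v ↦ (u₁ × u₂) · v`. -/
theorem stmt_13 (R : Type) [CommRing R] (u₁ u₂ u₃ : Fin 3 → R)
    (h : (crossProduct u₁ u₂) ⬝ᵥ u₃ = 1) :
    (∃ b : Module.Basis (Fin 3) R (Fin 3 → R), b 0 = u₁ ∧ b 1 = u₂ ∧ b 2 = u₃) ∧
    (∃ bM : Module.Basis (Fin 2) R (Submodule.span R {u₁, u₂}),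
      (bM 0 : Fin 3 → R) = u₁ ∧ (bM 1 : Fin 3 → R) = u₂) ∧
    (∃ N : Submodule R (Fin 3 → R), IsCompl (Submodule.span R {u₁, u₂}) N) ∧
    (∀ v : Fin 3 → R, v ∈ Submodule.span R {u₁, u₂} ↔ (crossProduct u₁ u₂) ⬝ᵥ v = 0) := by
  set c := crossProduct u₁ u₂ with hc
  have hc1 : c ⬝ᵥ u₁ = 0 := by
    simp [hc, crossProduct, dotProduct, Fin.sum_univ_three]; ring
  have hc2 : c ⬝ᵥ u₂ = 0 := by
    simp [hc, crossProduct, dotProduct, Fin.sum_univ_three]; ring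
  -- the matrix with columns u₁ u₂ u₃
  set A : Matrix (Fin 3) (Fin 3) R := (Matrix.of ![u₁, u₂, u₃])ᵀ with hA
  have hdet : A.det = 1 := by
    rw [hA, Matrix.det_transpose, Matrix.det_fin_three]
    simp only [Matrix.of_apply, Matrix.cons_val', Matrix.cons_val_zero, Matrix.cons_val_one,
      Matrix.head_cons, Matrix.empty_val', Matrix.cons_val_fin_one, Matrix.head_fin_const]
    rw [← h]
    simp [hc, crossProduct, dotProduct, Fin.sum_univ_three]
    ring
  have hinv : Invertible A.det := hdet ▸ invertibleOne
  have hAinv : Invertible A := A.invertibleOfDetInvertible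
  let e := A.toLinearEquiv' hAinv
  let b : Module.Basis (Fin 3) R (Fin 3 → R) := (Pi.basisFun R (Fin 3)).map e
  have hbcol : ∀ i, b i = fun j => A j i := by
    intro i
    ext j
    fin_cases i <;>
      simp [b, e, Matrix.toLinearEquiv', Matrix.mulVec, dotProduct, Fin.sum_univ_three,
        Pi.single_apply]
  have hb0 : b 0 = u₁ := by rw [hbcol]; ext j; simp [hA]
  have hb1 : b 1 = u₂ := by rw [hbcol]; ext j; simp [hA, vecHead, vecTail]
  have hb2 : b 2 = u₃ := by rw [hbcol]; ext j; simp [hA, vecHead, vecTail]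
  -- part 4: kernel characterization
  have hker : ∀ v : Fin 3 → R, v ∈ Submodule.span R {u₁, u₂} ↔ c ⬝ᵥ v = 0 := by
    intro v
    constructor
    · intro hv
      induction hv using Submodule.span_induction with
      | mem x hx => rcases hx with rfl | rfl
                    · exact hc1
                    · exact hc2
      | zero => simp
      | add x y _ _ hx hy => rw [dotProduct_add, hx, hy, add_zero]
      | smul a x _ hx => rw [dotProduct_smul, hx, smul_zero]
    · intro hv
      have hrepr := b.sum_repr v
      rw [Fin.sum_univ_three, hb0, hb1, hb2] at hrepr
      have hcv : c ⬝ᵥ v = b.repr v 2 := by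
        conv_lhs => rw [← hrepr]
        rw [dotProduct_add, dotProduct_add, dotProduct_smul,
          dotProduct_smul, dotProduct_smul, hc1, hc2, h, smul_zero, smul_zero,
          smul_eq_mul, mul_one, zero_add, zero_add]
      rw [hv] at hcv
      rw [← hrepr, ← hcv]
      simp only [zero_smul, add_zero]
      exact Submodule.add_mem _
        (Submodule.smul_mem _ _ (Submodule.subset_span (Set.mem_insert _ _)))
        (Submodule.smul_mem _ _ (Submodule.subset_span (Set.mem_insert_of_mem _ rfl)))
  refine ⟨⟨b, hb0, hb1, hb2⟩, ?_, ?_, hker⟩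
  · -- basis of the span
    have hli : LinearIndependent R ![u₁, u₂] := by
      have : ![u₁, u₂] = b ∘ ![0, 1] := by
        ext i j
        fin_cases i <;> simp [hb0, hb1]
      rw [this]
      exact b.linearIndependent.comp ![0, 1] (by decide)
    have hrange : Set.range ![u₁, u₂] = {u₁, u₂} := by
      ext x
      simp only [Set.mem_range, Fin.exists_fin_two, Matrix.cons_val_zero, Matrix.cons_val_one,
        Matrix.head_cons, Set.mem_insert_iff, Set.mem_singleton_iff]
      tauto
    refine ⟨(Module.Basis.span hli).map (LinearEquiv.ofEq _ _ (by rw [← hrange])), ?_, ?_⟩ <;>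
      rw [Module.Basis.map_apply, LinearEquiv.coe_ofEq_apply, Module.Basis.span_apply] <;> simp
  · -- complement
    refine ⟨Submodule.span R {u₃}, ?_, ?_⟩
    · rw [Submodule.disjoint_def]
      intro v hv1 hv2
      rw [Submodule.mem_span_singleton] at hv2
      obtain ⟨d, rfl⟩ := hv2
      have : c ⬝ᵥ (d • u₃) = 0 := (hker _).mp hv1
      rw [dotProduct_smul, h, smul_eq_mul, mul_one] at this
      rw [this, zero_smul]
    · rw [codisjoint_iff_le_sup]
      intro v _
      have hrepr := b.sum_repr v
      rw [Fin.sum_univ_three, hb0, hb1, hb2] at hrepr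
      rw [← hrepr]
      refine Submodule.add_mem _ (Submodule.mem_sup_left ?_) (Submodule.mem_sup_right ?_)
      · exact Submodule.add_mem _
          (Submodule.smul_mem _ _ (Submodule.subset_span (Set.mem_insert _ _)))
          (Submodule.smul_mem _ _ (Submodule.subset_span (Set.mem_insert_of_mem _ rfl)))
      · exact Submodule.smul_mem _ _ (Submodule.subset_span rfl)
end
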